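/- arXiv:2310.13027 — 2 statements merged into one kernel-verified Lean document; each statement's English description precedes it below -/
import Mathlib

section
/- Let x₁, x₂ be fixed real numbers, and let ε₁, ε₂ be independent standard Gaussian random variables. Then as σ → +∞, the probability P(softmax(x₁ + ε₁σ, x₂ + ε₂σ)[1] > 1/2) converges to 1/2. -/
open MeasureTheory ProbabilityTheory Filter Set

theorem stmt_4 {Ω : Type*} [MeasurableSpace Ω] (μ : Measure Ω) [IsProbabilityMeasure μ]
    (ε₁ ε₂ : Ω → ℝ) (hm₁ : Measurable ε₁) (hm₂ : Measurable ε₂)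
    (h₁ : Measure.map ε₁ μ = gaussianReal 0 1) (h₂ : Measure.map ε₂ μ = gaussianReal 0 1)
    (hind : IndepFun ε₁ ε₂ μ) (x₁ x₂ : ℝ) :
    Tendsto (fun σ : ℝ =>
        (μ {ω | Real.exp (x₁ + ε₁ ω * σ) /
            (Real.exp (x₁ + ε₁ ω * σ) + Real.exp (x₂ + ε₂ ω * σ)) > 1/2}).toReal)
      atTop (nhds (1/2)) := by
  set γ := gaussianReal 0 1 with hγ
  set c := x₁ - x₂ with hc
  -- the joint distribution is the product of two gaussians
  have hjoint : Measure.map (fun ω => (ε₁ ω, ε₂ ω)) μ = γ.prod γ := by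
    rw [(indepFun_iff_map_prod_eq_prod_map_map hm₁.aemeasurable hm₂.aemeasurable).mp hind,
      h₁, h₂]
  have hγs : ∀ x : ℝ, γ {x} = 0 := fun x =>
    gaussianReal_absolutelyContinuous 0 one_ne_zero (measure_singleton x)
  -- the distribution ν of ε₂ - ε₁
  set D : Ω → ℝ := fun ω => ε₂ ω - ε₁ ω with hD
  have hmD : Measurable D := hm₂.sub hm₁
  set ν := Measure.map D μ with hν
  have hνdef : ν = Measure.map (fun p : ℝ × ℝ => p.2 - p.1) (γ.prod γ) := by
    rw [hν, ← hjoint, Measure.map_map (g := fun p : ℝ × ℝ => p.2 - p.1) (measurable_snd.sub measurable_fst) (hm₁.prodMk hm₂)]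
    rfl
  have : IsProbabilityMeasure ν := Measure.isProbabilityMeasure_map hmD.aemeasurable
  -- ν has no atom at 0
  have hν0 : ν {0} = 0 := by
    rw [hνdef, Measure.map_apply (f := fun p : ℝ × ℝ => p.2 - p.1) (measurable_snd.sub measurable_fst) (measurableSet_singleton 0)]
    have hset : MeasurableSet ((fun p : ℝ × ℝ => p.2 - p.1) ⁻¹' {0}) :=
      (measurable_snd.sub measurable_fst) (measurableSet_singleton 0)
    rw [Measure.prod_apply hset]
    have : ∀ x : ℝ, γ (Prod.mk x ⁻¹' ((fun p : ℝ × ℝ => p.2 - p.1) ⁻¹' {0})) = 0 := by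
      intro x
      have : Prod.mk x ⁻¹' ((fun p : ℝ × ℝ => p.2 - p.1) ⁻¹' {0}) = {x} := by
        ext y; simp [sub_eq_zero]
      rw [this]; exact hγs x
    simp [this]
  -- symmetry : ν (Iio 0) = ν (Ioi 0)
  have hsym : ν (Iio 0) = ν (Ioi 0) := by
    have hswap : Measure.map (fun p : ℝ × ℝ => p.1 - p.2) (γ.prod γ) = ν := by
      rw [hνdef]
      conv_lhs => rw [← Measure.prod_swap]
      rw [Measure.map_map (g := fun p : ℝ × ℝ => p.1 - p.2) (measurable_fst.sub measurable_snd) measurable_swap]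
      rfl
    have h1 : ν (Ioi 0) = Measure.map (fun p : ℝ × ℝ => p.1 - p.2) (γ.prod γ) (Iio 0) := by
      rw [hνdef, Measure.map_apply (f := fun p : ℝ × ℝ => p.2 - p.1) (measurable_snd.sub measurable_fst) measurableSet_Ioi,
        Measure.map_apply (f := fun p : ℝ × ℝ => p.1 - p.2) (measurable_fst.sub measurable_snd) measurableSet_Iio]
      congr 1
      ext p
      simp [sub_pos, sub_neg]
    rw [h1, hswap]
  -- hence ν (Iio 0) = 1/2 (as a real number)
  have hcompl : ν (Iio 0) + ν (Ioi 0) = 1 := by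
    have : ν (Iio (0:ℝ) ∪ Ioi 0) = ν (Iio 0) + ν (Ioi 0) :=
      measure_union (((Set.Iic_disjoint_Ioi le_rfl).mono_left Set.Iio_subset_Iic_self))
        measurableSet_Ioi
    rw [← this, Iio_union_Ioi, measure_compl (measurableSet_singleton 0) (measure_ne_top ν _),
      hν0, measure_univ, tsub_zero]
  have hfin : ν (Iio 0) ≠ ⊤ := measure_ne_top ν _
  have hhalf : (ν (Iio 0)).toReal = 1/2 := by
    have hcompl' : ν (Iio 0) + ν (Iio 0) = 1 := by
      nth_rewrite 2 [hsym]; exact hcompl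
    have h2 : (ν (Iio 0)).toReal + (ν (Iio 0)).toReal = 1 := by
      rw [← ENNReal.toReal_add hfin hfin, hcompl', ENNReal.toReal_one]
    linarith
  -- identify the event for σ > 0
  have hevent : ∀ σ : ℝ, 0 < σ →
      {ω | Real.exp (x₁ + ε₁ ω * σ) /
          (Real.exp (x₁ + ε₁ ω * σ) + Real.exp (x₂ + ε₂ ω * σ)) > 1/2} = D ⁻¹' Iio (c / σ) := by
    intro σ hσ
    ext ω
    set a := x₁ + ε₁ ω * σ
    set b := x₂ + ε₂ ω * σ
    have hpos : 0 < Real.exp a + Real.exp b := by positivity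
    simp only [mem_setOf_eq, mem_preimage, mem_Iio, gt_iff_lt]
    rw [lt_div_iff₀ hpos, ← sub_pos]
    constructor
    · intro h
      rw [lt_div_iff₀ hσ, ← sub_pos]
      have hba : Real.exp b < Real.exp a := by nlinarith
      have := (Real.exp_lt_exp).mp hba
      simp only [hD, a, b] at this ⊢
      nlinarith [this]
    · intro h
      rw [lt_div_iff₀ hσ, ← sub_pos] at h
      have hba : b < a := by simp only [hD, a, b] at h ⊢; nlinarith
      have := Real.exp_lt_exp.mpr hba
      nlinarith
  -- rewrite the probability using ν
  have hμν : ∀ σ : ℝ, 0 < σ →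
      (μ {ω | Real.exp (x₁ + ε₁ ω * σ) /
          (Real.exp (x₁ + ε₁ ω * σ) + Real.exp (x₂ + ε₂ ω * σ)) > 1/2}).toReal
        = ∫ x, (Iio (c / σ)).indicator (1 : ℝ → ℝ) x ∂ν := by
    intro σ hσ
    rw [hevent σ hσ, integral_indicator_one measurableSet_Iio, hν, Measure.real,
      Measure.map_apply hmD measurableSet_Iio]
  -- c / σ → 0
  have hlim : Tendsto (fun σ : ℝ => c / σ) atTop (nhds 0) :=
    Tendsto.div_atTop tendsto_const_nhds tendsto_id
  -- dominated convergence
  have hdct : Tendsto (fun σ : ℝ => ∫ x, (Iio (c / σ)).indicator (1 : ℝ → ℝ) x ∂ν)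
      atTop (nhds (∫ x, (Iio (0:ℝ)).indicator (1 : ℝ → ℝ) x ∂ν)) := by
    refine tendsto_integral_filter_of_dominated_convergence (1 : ℝ → ℝ)
      (Eventually.of_forall fun σ => ?_) (Eventually.of_forall fun σ => ?_) ?_ ?_
    · exact ((measurable_const.indicator measurableSet_Iio).aestronglyMeasurable)
    · refine Eventually.of_forall fun x => ?_
      by_cases hx : x ∈ Iio (c / σ) <;> simp [indicator_apply, hx]
    · exact integrable_const 1
    · have hae : ∀ᵐ x ∂ν, x ≠ 0 := by
        rw [ae_iff]
        convert hν0 using 2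
        simp
      filter_upwards [hae] with x hx
      rcases lt_or_gt_of_ne hx with hx0 | hx0
      · have hev : ∀ᶠ σ : ℝ in atTop, x < c / σ :=
          hlim (Ioi_mem_nhds hx0)
        have heq : ∀ᶠ σ : ℝ in atTop,
            (Iio (c / σ)).indicator (1 : ℝ → ℝ) x = 1 := by
          filter_upwards [hev] with σ hσ
          simp [indicator_apply, hσ]
        have hval : (Iio (0:ℝ)).indicator (1 : ℝ → ℝ) x = 1 := by
          simp [indicator_apply, hx0]
        rw [hval]
        exact Tendsto.congr' (Filter.EventuallyEq.symm heq) tendsto_const_nhds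
      · have hev : ∀ᶠ σ : ℝ in atTop, c / σ < x :=
          hlim (Iio_mem_nhds hx0)
        have heq : ∀ᶠ σ : ℝ in atTop,
            (Iio (c / σ)).indicator (1 : ℝ → ℝ) x = 0 := by
          filter_upwards [hev] with σ hσ
          simp [indicator_apply, not_lt.mpr (le_of_lt hσ)]
        have hval : (Iio (0:ℝ)).indicator (1 : ℝ → ℝ) x = 0 := by
          simp [indicator_apply, not_lt.mpr (le_of_lt hx0)]
        rw [hval]
        exact Tendsto.congr' (Filter.EventuallyEq.symm heq) tendsto_const_nhds
  have hval : (∫ x, (Iio (0:ℝ)).indicator (1 : ℝ → ℝ) x ∂ν) = 1/2 := by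
    rw [integral_indicator_one measurableSet_Iio, Measure.real, hhalf]
  rw [hval] at hdct
  refine hdct.congr' ?_
  filter_upwards [eventually_gt_atTop (0:ℝ)] with σ hσ
  exact (hμν σ hσ).symm
end

section
/- Let α ∈ (0,1). Suppose posteriors p(ω|D_ID) ∝ p(D_ID|ω)p(ω) and p(ω|D_OOD) ∝ p(D_OOD|ω)p(ω). Then for any variational density q: D_KL(q ‖ p(·|D_ID)) - α·D_KL(q ‖ p(·|D_OOD)) = (1-α)·D_KL(q ‖ p) - E_{ω∼q}[log((p(D_ID|ω)/p(D_OOD|ω)^α))] + C, where C = log p(D_ID) - α log p(D_OOD) is a constant independent of q. Consequently, defining the generalized likelihood p(D|ω) := (p(D_ID|ω)/p(D_OOD|ω)^α)^{1/(1-α)}, the combined objective equals (1-α) times [D_KL(q ‖ p) - E_{ω∼q}[log p(D|ω)]] plus a constant, i.e., the combined ID-minimization/OOD-maximization objective equals (up to positive scaling and additive constant) the KL divergence between q and the pseudo-posterior proportional to p(D|ω)p(ω). -/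
open MeasureTheory

theorem stmt_12 {α : Type*} [MeasurableSpace α] (ν : Measure α)
    (q p LID LOOD : α → ℝ) (ZID ZOOD : ℝ) (α' : ℝ) (hα0 : 0 < α') (hα1 : α' < 1)
    (hq : ∀ ω, 0 < q ω) (hp : ∀ ω, 0 < p ω)
    (hLID : ∀ ω, 0 < LID ω) (hLOOD : ∀ ω, 0 < LOOD ω)
    (hZID : 0 < ZID) (hZOOD : 0 < ZOOD)
    (hqint : ∫ ω, q ω ∂ν = 1)
    (h1 : Integrable (fun ω => q ω * Real.log (q ω / (LID ω * p ω / ZID))) ν)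
    (h2 : Integrable (fun ω => q ω * Real.log (q ω / (LOOD ω * p ω / ZOOD))) ν)
    (h3 : Integrable (fun ω => q ω * Real.log (q ω / p ω)) ν)
    (h4 : Integrable (fun ω => q ω * Real.log (LID ω)) ν)
    (h5 : Integrable (fun ω => q ω * Real.log (LOOD ω)) ν)
    (h6 : Integrable q ν) :
    ((∫ ω, q ω * Real.log (q ω / (LID ω * p ω / ZID)) ∂ν)
        - α' * ∫ ω, q ω * Real.log (q ω / (LOOD ω * p ω / ZOOD)) ∂ν
      = (1 - α') * (∫ ω, q ω * Real.log (q ω / p ω) ∂ν)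
        - (∫ ω, q ω * Real.log (LID ω / LOOD ω ^ α') ∂ν)
        + (Real.log ZID - α' * Real.log ZOOD)) ∧
    ((∫ ω, q ω * Real.log (q ω / (LID ω * p ω / ZID)) ∂ν)
        - α' * ∫ ω, q ω * Real.log (q ω / (LOOD ω * p ω / ZOOD)) ∂ν
      = (1 - α') * ((∫ ω, q ω * Real.log (q ω / p ω) ∂ν)
          - ∫ ω, q ω * Real.log ((LID ω / LOOD ω ^ α') ^ (1 / (1 - α'))) ∂ν)
        + (Real.log ZID - α' * Real.log ZOOD)) := by
  have h1α : (1 : ℝ) - α' ≠ 0 := by linarith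
  -- generic decomposition lemma
  have key : ∀ (L : α → ℝ) (Z : ℝ), (∀ ω, 0 < L ω) → 0 < Z →
      Integrable (fun ω => q ω * Real.log (L ω)) ν →
      ∫ ω, q ω * Real.log (q ω / (L ω * p ω / Z)) ∂ν
        = (∫ ω, q ω * Real.log (q ω / p ω) ∂ν)
          - (∫ ω, q ω * Real.log (L ω) ∂ν) + Real.log Z := by
    intro L Z hL hZ hLint
    have heq : ∀ ω, q ω * Real.log (q ω / (L ω * p ω / Z))
        = q ω * Real.log (q ω / p ω) - q ω * Real.log (L ω) + q ω * Real.log Z := by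
      intro ω
      rw [Real.log_div (hq ω).ne' (div_pos (mul_pos (hL ω) (hp ω)) hZ).ne',
        Real.log_div (mul_pos (hL ω) (hp ω)).ne' hZ.ne',
        Real.log_mul (hL ω).ne' (hp ω).ne',
        Real.log_div (hq ω).ne' (hp ω).ne']
      ring
    simp_rw [heq]
    have hsub : Integrable (fun ω => q ω * Real.log (q ω / p ω) - q ω * Real.log (L ω)) ν :=
      h3.sub hLint
    have hmc : Integrable (fun ω => q ω * Real.log Z) ν := h6.mul_const (Real.log Z)
    rw [integral_add hsub hmc, integral_sub h3 hLint,
      integral_mul_const, hqint, one_mul]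
  have hID := key LID ZID hLID hZID h4
  have hOOD := key LOOD ZOOD hLOOD hZOOD h5
  -- divide term
  have hdiv : ∫ ω, q ω * Real.log (LID ω / LOOD ω ^ α') ∂ν
      = (∫ ω, q ω * Real.log (LID ω) ∂ν) - α' * ∫ ω, q ω * Real.log (LOOD ω) ∂ν := by
    have heq : ∀ ω, q ω * Real.log (LID ω / LOOD ω ^ α')
        = q ω * Real.log (LID ω) - α' * (q ω * Real.log (LOOD ω)) := by
      intro ω
      rw [Real.log_div (hLID ω).ne' (Real.rpow_pos_of_pos (hLOOD ω) α').ne', Real.log_rpow (hLOOD ω)]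
      ring
    simp_rw [heq]
    rw [integral_sub h4 (h5.const_mul α'), integral_const_mul]
  have hpow : ∫ ω, q ω * Real.log ((LID ω / LOOD ω ^ α') ^ (1 / (1 - α'))) ∂ν
      = (1 / (1 - α')) * ∫ ω, q ω * Real.log (LID ω / LOOD ω ^ α') ∂ν := by
    have heq : ∀ ω, q ω * Real.log ((LID ω / LOOD ω ^ α') ^ (1 / (1 - α')))
        = (1 / (1 - α')) * (q ω * Real.log (LID ω / LOOD ω ^ α')) := by
      intro ω
      rw [Real.log_rpow (div_pos (hLID ω) (Real.rpow_pos_of_pos (hLOOD ω) α'))]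
      ring
    simp_rw [heq]
    rw [integral_const_mul]
  constructor
  · rw [hID, hOOD, hdiv]; ring
  · rw [hID, hOOD, hpow, hdiv]; field_simp; ring
end
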